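/- Let P, Q ∈ ℤ[X] be nonzero polynomials with P(0) = Q(0) = 0 and let f : ℕ → ℤ be any function. Suppose the relation φ(x, y, z) := (f(x) + P(y) = Q(z) and f(x) ≠ 0), where P, Q are evaluated at positive integers cast into ℤ, is Ramsey partition regular in (x,y),z over the positive integers. Then P = Q and deg P = 1. -/

import Mathlib

/-- A ternary relation `φ` on the positive integers is Ramsey partition regular in
`(x,y),z` if for every finite colouring of the positive integers there are a colour
class `C` and an infinite `H ⊆ C` such that for all `h₁ < h₂` in `H` there is `z ∈ C`
with `φ h₁ h₂ z`. -/
def RamseyPR (φ : ℕ → ℕ → ℕ → Prop) : Prop :=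
  ∀ r : ℕ, ∀ col : ℕ → Fin r, ∃ j : Fin r, ∃ H : Set ℕ,
    H.Infinite ∧ (∀ h ∈ H, 0 < h ∧ col h = j) ∧
    ∀ h₁ ∈ H, ∀ h₂ ∈ H, h₁ < h₂ → ∃ z : ℕ, (0 < z ∧ col z = j) ∧ φ h₁ h₂ z

open Filter Polynomial Real Asymptotics

/-- Parity gadget: if `v` is within `1/4` of `u + 1`, then either the floors of `u,v`
have different parities, or the floors of `u+1/2, v+1/2` do. -/
lemma parity_gadget {u v : ℝ} (h1 : u + 3/4 < v) (h2 : v < u + 5/4) :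
    ⌊u⌋ % 2 ≠ ⌊v⌋ % 2 ∨ ⌊u + (2:ℝ)⁻¹⌋ % 2 ≠ ⌊v + (2:ℝ)⁻¹⌋ % 2 := by
  by_contra hc
  push_neg at hc
  obtain ⟨e1, e2⟩ := hc
  have hu := Int.floor_le u
  have hu' := Int.lt_floor_add_one u
  have hAB : ⌊u⌋ ≤ ⌊v⌋ := Int.floor_le_floor (by linarith)
  have hBA : ⌊v⌋ ≤ ⌊u⌋ + 2 := by
    have : v < (⌊u⌋ + 2 : ℤ) + 1 := by push_cast; linarith
    have := Int.floor_le_floor (le_of_lt h2)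
    have h9 : ⌊v⌋ ≤ ⌊u + 5/4⌋ := this
    have : ⌊u + 5/4⌋ ≤ ⌊u⌋ + 2 := by
      rw [Int.floor_le_iff]; push_cast; linarith
    omega
  have hcase : ⌊v⌋ = ⌊u⌋ ∨ ⌊v⌋ = ⌊u⌋ + 2 := by omega
  have hv := Int.floor_le v
  have hv' := Int.lt_floor_add_one v
  rcases hcase with hB | hB
  · -- u ∈ [⌊u⌋, ⌊u⌋+1/4), v ∈ (⌊u⌋+3/4, ⌊u⌋+1)
    have hvlt : v < (⌊u⌋ : ℝ) + 1 := by rw [hB] at hv'; exact_mod_cast hv'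
    have hu14 : u < (⌊u⌋ : ℝ) + 1/4 := by linarith
    have hA' : ⌊u + (2:ℝ)⁻¹⌋ = ⌊u⌋ := by
      rw [Int.floor_eq_iff]
      push_cast; constructor <;> linarith
    have hB' : ⌊v + (2:ℝ)⁻¹⌋ = ⌊u⌋ + 1 := by
      have hvge : (⌊u⌋ : ℝ) + 3/4 < v := by linarith
      rw [Int.floor_eq_iff]
      push_cast; constructor <;> linarith
    rw [hA', hB'] at e2; omega
  · -- v ≥ ⌊u⌋+2, u ∈ (⌊u⌋+3/4, ⌊u⌋+1)
    have hvge : ((⌊u⌋ : ℝ) + 2) ≤ v := by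
      have : ((⌊v⌋ : ℝ)) ≤ v := hv
      rw [hB] at this; push_cast at this; linarith
    have hu34 : (⌊u⌋ : ℝ) + 3/4 < u := by linarith
    have hA' : ⌊u + (2:ℝ)⁻¹⌋ = ⌊u⌋ + 1 := by
      rw [Int.floor_eq_iff]; push_cast; constructor <;> linarith
    have hB' : ⌊v + (2:ℝ)⁻¹⌋ = ⌊u⌋ + 2 := by
      rw [Int.floor_eq_iff]; push_cast; constructor <;> linarith
    rw [hA', hB'] at e2; omega

/-- The 4-colouring associated to a real "scale" function `g`. -/
noncomputable def pcol (g : ℕ → ℝ) (n : ℕ) : Fin 4 :=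
  ⟨(⌊g n⌋ % 2).toNat * 2 + (⌊g n + (2:ℝ)⁻¹⌋ % 2).toNat, by omega⟩

lemma pcol_eq {g : ℕ → ℝ} {n m : ℕ} (h : pcol g n = pcol g m) :
    ⌊g n⌋ % 2 = ⌊g m⌋ % 2 ∧ ⌊g n + (2:ℝ)⁻¹⌋ % 2 = ⌊g m + (2:ℝ)⁻¹⌋ % 2 := by
  have := congrArg Fin.val h
  simp only [pcol] at this
  omega

lemma extract {P Q : Polynomial ℤ} {f : ℕ → ℤ}
    (h : RamseyPR fun x y z => f x + P.eval (y : ℤ) = Q.eval (z : ℤ) ∧ f x ≠ 0)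
    {r : ℕ} (col : ℕ → Fin r) :
    ∃ (j : Fin r) (c : ℤ) (Y : Set ℕ), c ≠ 0 ∧ Y.Infinite ∧ (∀ y ∈ Y, col y = j) ∧
      ∀ y ∈ Y, ∃ z : ℕ, 0 < z ∧ col z = j ∧ c + P.eval (y : ℤ) = Q.eval (z : ℤ) := by
  obtain ⟨j, H, hinf, hcol, hsol⟩ := h r col
  obtain ⟨h1, hh1⟩ := hinf.nonempty
  have hYinf : {y ∈ H | h1 < y}.Infinite := by
    refine ((hinf.diff (Set.finite_le_nat h1)).mono ?_)
    intro y hy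
    exact ⟨hy.1, by simpa using Nat.lt_of_not_le (by simpa using hy.2)⟩
  obtain ⟨y0, hy0⟩ := hYinf.nonempty
  obtain ⟨z0, _, hz0⟩ := hsol h1 hh1 y0 hy0.1 hy0.2
  refine ⟨j, f h1, {y ∈ H | h1 < y}, hz0.2, hYinf, fun y hy => (hcol y hy.1).2, ?_⟩
  intro y hy
  obtain ⟨z, hz1, hz2⟩ := hsol h1 hh1 y hy.1 hy.2
  exact ⟨z, hz1.1, hz1.2, hz2.1⟩

lemma infinite_frequently {Y : Set ℕ} (h : Y.Infinite) : ∃ᶠ y in atTop, y ∈ Y := by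
  rw [Nat.frequently_atTop_iff_infinite]
  exact h

/-- Log-asymptotics of a real polynomial. -/
lemma log_asymp (F : ℝ[X]) (hd : 1 ≤ F.natDegree) :
    Tendsto (fun x : ℝ => Real.log (F.eval x) -
      ((F.natDegree : ℝ) * Real.log x + Real.log F.leadingCoeff)) atTop (nhds 0) := by
  have hF : F ≠ 0 := fun h => by simp [h] at hd
  have hlead : F.leadingCoeff ≠ 0 := leadingCoeff_ne_zero.mpr hF
  have hden : ∀ᶠ x : ℝ in atTop, F.leadingCoeff * x ^ F.natDegree ≠ 0 :=
    (eventually_gt_atTop 0).mono fun x hx => mul_ne_zero hlead (pow_ne_zero _ hx.ne')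
  have h1 : Tendsto (fun x => F.eval x / (F.leadingCoeff * x ^ F.natDegree)) atTop (nhds 1) := by
    have := (isEquivalent_iff_tendsto_one hden).mp F.isEquivalent_atTop_lead
    exact this
  have h2 : Tendsto (fun x => Real.log (F.eval x / (F.leadingCoeff * x ^ F.natDegree)))
      atTop (nhds 0) := by
    have := ((Real.continuousAt_log one_ne_zero).tendsto).comp h1
    simpa [Function.comp_def] using this
  refine h2.congr' ?_
  filter_upwards [F.eventually_no_roots hF, eventually_gt_atTop 0] with x hx hx0
  rw [Real.log_div hx (mul_ne_zero hlead (pow_ne_zero _ hx0.ne')),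
    Real.log_mul hlead (pow_ne_zero _ hx0.ne'), Real.log_pow]
  ring

/-- Workhorse: solutions `z` of `Q(z) = c + P(y)` are eventually large and satisfy
the log relation. -/
lemma workhorse (Pr Qr : ℝ[X]) (hp : 1 ≤ Pr.natDegree) (hq : 1 ≤ Qr.natDegree) (c : ℝ)
    {ε : ℝ} (hε : 0 < ε) (Z₀ : ℕ) :
    ∀ᶠ y : ℕ in atTop, ∀ z : ℕ, Qr.eval (z : ℝ) = c + Pr.eval (y : ℝ) →
      Z₀ ≤ z ∧
      |(Qr.natDegree : ℝ) * Real.log z - (Pr.natDegree : ℝ) * Real.log y -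
        (Real.log Pr.leadingCoeff - Real.log Qr.leadingCoeff)| < ε := by
  have hdegP : 0 < Pr.degree := natDegree_pos_iff_degree_pos.mp hp
  have habs : Tendsto (fun y : ℕ => |Pr.eval (y : ℝ)|) atTop atTop :=
    (Polynomial.abs_tendsto_atTop Pr hdegP).comp tendsto_natCast_atTop_atTop
  have hcabs : Tendsto (fun y : ℕ => |c + Pr.eval (y : ℝ)|) atTop atTop := by
    refine tendsto_atTop_mono' atTop ?_ (tendsto_atTop_add_const_right atTop (-|c|) habs)
    filter_upwards with y
    have : |Pr.eval (y : ℝ)| ≤ |c + Pr.eval (y : ℝ)| + |c| := by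
      calc |Pr.eval (y : ℝ)| = |c + Pr.eval (y : ℝ) - c| := by ring_nf
      _ ≤ |c + Pr.eval (y : ℝ)| + |c| := abs_sub _ _
    linarith
  -- E1 : z-side log asymptotics, sampled at naturals
  have hQnat : Tendsto (fun z : ℕ => Real.log (Qr.eval (z : ℝ)) -
      ((Qr.natDegree : ℝ) * Real.log z + Real.log Qr.leadingCoeff)) atTop (nhds 0) :=
    (log_asymp Qr hq).comp tendsto_natCast_atTop_atTop
  have hQev : ∀ᶠ z : ℕ in atTop, |Real.log (Qr.eval (z : ℝ)) -
      ((Qr.natDegree : ℝ) * Real.log z + Real.log Qr.leadingCoeff)| < ε / 3 := by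
    have := hQnat.eventually (eventually_abs_sub_lt 0 (by positivity : (0:ℝ) < ε / 3))
    simpa using this
  obtain ⟨N1, hN1⟩ := eventually_atTop.mp hQev
  set NN := max Z₀ N1 with hNN
  -- E2 : bound for `|Q(z)|` on small `z`
  obtain ⟨M, hM⟩ : ∃ M, ∀ z : ℕ, z < NN → |Qr.eval (z : ℝ)| ≤ M := by
    obtain ⟨M, hMem⟩ := ((Set.finite_Iio NN).image fun z : ℕ => |Qr.eval (z : ℝ)|).bddAbove
    exact ⟨M, fun z hz => hMem ⟨z, hz, rfl⟩⟩
  -- E3 : y-side log asymptotics with the constant c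
  have hPev : ∀ᶠ y : ℕ in atTop, |Real.log (Pr.eval (y : ℝ)) -
      ((Pr.natDegree : ℝ) * Real.log y + Real.log Pr.leadingCoeff)| < ε / 3 := by
    have := ((log_asymp Pr hp).comp tendsto_natCast_atTop_atTop).eventually
      (eventually_abs_sub_lt 0 (by positivity : (0:ℝ) < ε / 3))
    simpa using this
  have hPne : ∀ᶠ y : ℕ in atTop, Pr.eval (y : ℝ) ≠ 0 := by
    filter_upwards [habs.eventually_gt_atTop 0] with y hy
    intro h0; rw [h0] at hy; simp at hy
  have hcPne : ∀ᶠ y : ℕ in atTop, c + Pr.eval (y : ℝ) ≠ 0 := by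
    filter_upwards [hcabs.eventually_gt_atTop 0] with y hy
    intro h0; rw [h0] at hy; simp at hy
  have hratio : Tendsto (fun y : ℕ => (c + Pr.eval (y : ℝ)) / Pr.eval (y : ℝ))
      atTop (nhds 1) := by
    have hinv : Tendsto (fun y : ℕ => |Pr.eval (y : ℝ)|⁻¹) atTop (nhds 0) :=
      habs.inv_tendsto_atTop
    have hmain : Tendsto (fun y : ℕ => (c + Pr.eval (y : ℝ)) / Pr.eval (y : ℝ) - 1)
        atTop (nhds 0) := by
      refine squeeze_zero_norm' ?_ (by simpa using hinv.const_mul |c|)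
      filter_upwards [hPne] with y hy
      have : (c + Pr.eval (y : ℝ)) / Pr.eval (y : ℝ) - 1 = c / Pr.eval (y : ℝ) := by
        field_simp
        ring
      rw [this]
      simp [abs_div, div_eq_mul_inv]
    have := hmain.add_const 1
    simpa using this
  have hlogratio : ∀ᶠ y : ℕ in atTop,
      |Real.log (c + Pr.eval (y : ℝ)) - Real.log (Pr.eval (y : ℝ))| < ε / 3 := by
    have hcont : Tendsto (fun y : ℕ =>
        Real.log ((c + Pr.eval (y : ℝ)) / Pr.eval (y : ℝ))) atTop (nhds 0) := by
      have := ((Real.continuousAt_log one_ne_zero).tendsto).comp hratio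
      simpa [Function.comp_def] using this
    have hev := hcont.eventually (eventually_abs_sub_lt 0 (by positivity : (0:ℝ) < ε / 3))
    filter_upwards [hev, hPne, hcPne] with y h1 h2 h3
    rw [Real.log_div h3 h2] at h1
    simpa using h1
  -- Combine
  filter_upwards [hcabs.eventually_gt_atTop M, hPev, hlogratio] with y hyM hyP hylog
  intro z hz
  have hzlarge : NN ≤ z := by
    by_contra hlt
    push_neg at hlt
    have := hM z hlt
    rw [hz] at this
    linarith
  have hzN1 : N1 ≤ z := le_trans (le_max_right _ _) hzlarge
  have h1 := hN1 z hzN1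
  rw [hz] at h1
  refine ⟨le_trans (le_max_left _ _) hzlarge, ?_⟩
  have key : |Real.log (c + Pr.eval (y : ℝ)) -
      ((Pr.natDegree : ℝ) * Real.log y + Real.log Pr.leadingCoeff)| < 2 * ε / 3 := by
    have := abs_sub_abs_le_abs_sub (Real.log (c + Pr.eval (y : ℝ))) (Real.log (Pr.eval (y : ℝ)))
    calc |Real.log (c + Pr.eval (y : ℝ)) -
        ((Pr.natDegree : ℝ) * Real.log y + Real.log Pr.leadingCoeff)|
        ≤ |Real.log (c + Pr.eval (y : ℝ)) - Real.log (Pr.eval (y : ℝ))| +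
          |Real.log (Pr.eval (y : ℝ)) -
            ((Pr.natDegree : ℝ) * Real.log y + Real.log Pr.leadingCoeff)| := by
          have := abs_sub_le (Real.log (c + Pr.eval (y : ℝ))) (Real.log (Pr.eval (y : ℝ)))
            ((Pr.natDegree : ℝ) * Real.log y + Real.log Pr.leadingCoeff)
          linarith
      _ < ε / 3 + ε / 3 := by exact add_lt_add hylog hyP
      _ = 2 * ε / 3 := by ring
  rw [abs_sub_lt_iff] at h1 key ⊢
  constructor <;> linarith

lemma clash {P Q : Polynomial ℤ} {f : ℕ → ℤ}
    (h : RamseyPR fun x y z => f x + P.eval (y : ℤ) = Q.eval (z : ℤ) ∧ f x ≠ 0)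
    (g : ℕ → ℝ)
    (hg : ∀ c : ℤ, c ≠ 0 → ∀ᶠ y : ℕ in atTop, ∀ z : ℕ, 0 < z →
      c + P.eval (y : ℤ) = Q.eval (z : ℤ) →
      (g y + 3/4 < g z ∧ g z < g y + 5/4) ∨ (g z + 3/4 < g y ∧ g y < g z + 5/4)) :
    False := by
  obtain ⟨j, c, Y, hc, hYinf, hYcol, hsol⟩ := extract h (pcol g)
  obtain ⟨y, hyY, hyev⟩ := ((infinite_frequently hYinf).and_eventually (hg c hc)).exists
  obtain ⟨z, hz0, hzcol, heq⟩ := hsol y hyY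
  have hpar := pcol_eq (hzcol.trans (hYcol y hyY).symm)
  rcases hyev z hz0 heq with ⟨w1, w2⟩ | ⟨w1, w2⟩
  · rcases parity_gadget w1 w2 with hne | hne
    · exact hne hpar.1.symm
    · exact hne hpar.2.symm
  · rcases parity_gadget w1 w2 with hne | hne
    · exact hne hpar.1
    · exact hne hpar.2

lemma int_cast_inj' : Function.Injective (Int.castRingHom ℝ) := fun a b hab => by
  have : ((a : ℤ) : ℝ) = ((b : ℤ) : ℝ) := hab
  exact_mod_cast this

noncomputable def Rp (P : Polynomial ℤ) : Polynomial ℝ := P.map (Int.castRingHom ℝ)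

lemma Rp_eval (P : Polynomial ℤ) (n : ℕ) :
    (Rp P).eval (n : ℝ) = ((P.eval (n : ℤ) : ℤ) : ℝ) := by
  have := Polynomial.eval_intCast_map (Int.castRingHom ℝ) P (n : ℤ)
  rw [Rp]
  push_cast at this
  simpa using this

lemma Rp_natDegree (P : Polynomial ℤ) : (Rp P).natDegree = P.natDegree :=
  P.natDegree_map_eq_of_injective int_cast_inj'

lemma Rp_leadingCoeff (P : Polynomial ℤ) :
    (Rp P).leadingCoeff = ((P.leadingCoeff : ℤ) : ℝ) :=
  P.leadingCoeff_map_of_injective int_cast_inj'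

lemma Rp_ne_zero {P : Polynomial ℤ} (hP : P ≠ 0) : Rp P ≠ 0 := by
  intro h
  exact hP (Polynomial.map_injective _ int_cast_inj' (by simpa [Rp] using h))

lemma natDegree_pos_of_root {P : Polynomial ℤ} (hP : P ≠ 0) (hP0 : P.eval 0 = 0) :
    1 ≤ P.natDegree := by
  by_contra hlt
  push_neg at hlt
  have hd : P.natDegree = 0 := by omega
  have hC := Polynomial.eq_C_of_natDegree_eq_zero hd
  rw [hC] at hP0
  simp at hP0
  exact hP (by rw [hC, hP0]; simp)

lemma deg_eq {P Q : Polynomial ℤ} {f : ℕ → ℤ}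
    (hp : 1 ≤ P.natDegree) (hq : 1 ≤ Q.natDegree)
    (h : RamseyPR fun x y z => f x + P.eval (y : ℤ) = Q.eval (z : ℤ) ∧ f x ≠ 0) :
    P.natDegree = Q.natDegree := by
  by_contra hne
  set p := P.natDegree with hpdef
  set q := Q.natDegree with hqdef
  set lam : ℝ := (p : ℝ) / q with hlam
  have hq0 : (0:ℝ) < q := by exact_mod_cast hq
  have hp0 : (0:ℝ) < p := by exact_mod_cast hp
  have hlampos : 0 < lam := by positivity
  have hlamne : lam ≠ 1 := by
    intro h1
    rw [hlam, div_eq_one_iff_eq (ne_of_gt hq0)] at h1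
    exact hne (by exact_mod_cast h1)
  have hlogne : Real.log lam ≠ 0 := by
    intro h0
    rcases Real.log_eq_zero.mp h0 with h | h | h
    · exact absurd h (by positivity)
    · exact hlamne h
    · linarith
  set L := |Real.log lam| with hLdef
  have hLpos : 0 < L := abs_pos.mpr hlogne
  set g : ℕ → ℝ := fun n => Real.log (Real.log n) / L with hg
  refine clash h g ?_
  intro c hc
  obtain ⟨δ, hδ0, hδ⟩ : ∃ δ > 0, ∀ x : ℝ, |x - lam| < δ →
      |Real.log x - Real.log lam| < L / 4 := by
    have hcont := Real.continuousAt_log (ne_of_gt hlampos)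
    rw [Metric.continuousAt_iff] at hcont
    obtain ⟨δ, hδ0, hδ⟩ := hcont (L / 4) (by positivity)
    exact ⟨δ, hδ0, fun x hx => by
      simpa [Real.dist_eq] using hδ (by simpa [Real.dist_eq] using hx)⟩
  set γ : ℝ := Real.log ((P.leadingCoeff : ℤ) : ℝ) - Real.log ((Q.leadingCoeff : ℤ) : ℝ)
    with hγ
  have hW := workhorse (Rp P) (Rp Q) (by rw [Rp_natDegree]; exact hp)
    (by rw [Rp_natDegree]; exact hq) (c : ℝ) one_pos 3
  have hlogy : ∀ᶠ y : ℕ in atTop,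
      (|γ| + 1) / ((q : ℝ) * δ) < Real.log y ∧ 1 < Real.log y := by
    have ht := Real.tendsto_log_atTop.comp (tendsto_natCast_atTop_atTop (R := ℝ))
    exact (ht.eventually_gt_atTop _).and (ht.eventually_gt_atTop _)
  filter_upwards [hW, hlogy] with y hy hy2
  obtain ⟨hy1, hylog1⟩ := hy2
  intro z hz0 heq
  have heqR : (Rp Q).eval (z : ℝ) = (c : ℝ) + (Rp P).eval (y : ℝ) := by
    rw [Rp_eval, Rp_eval]
    exact_mod_cast heq.symm
  obtain ⟨hz3, hzlog⟩ := hy z heqR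
  rw [Rp_natDegree, Rp_natDegree, Rp_leadingCoeff, Rp_leadingCoeff] at hzlog
  have hlogzpos : 0 < Real.log z := by
    apply Real.log_pos
    exact_mod_cast (by omega : 1 < z)
  have hlogypos : 0 < Real.log y := by linarith
  set t : ℝ := Real.log z / Real.log y with htdef
  have htlam : |t - lam| < δ := by
    have h1 : t - lam = ((q : ℝ) * Real.log z - (p : ℝ) * Real.log y) /
        ((q : ℝ) * Real.log y) := by
      rw [htdef, hlam]
      field_simp
    rw [h1, abs_div, abs_of_pos (mul_pos hq0 hlogypos), div_lt_iff₀ (mul_pos hq0 hlogypos)]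
    have hnum : |(q : ℝ) * Real.log z - (p : ℝ) * Real.log y| < 1 + |γ| := by
      have h2 := abs_abs_sub_abs_le_abs_sub ((q : ℝ) * Real.log z - (p : ℝ) * Real.log y) γ
      have h3 := abs_sub_abs_le_abs_sub ((q : ℝ) * Real.log z - (p : ℝ) * Real.log y) γ
      have := abs_sub_le ((q : ℝ) * Real.log z - (p : ℝ) * Real.log y) γ 0
      simp only [sub_zero] at this
      calc |(q : ℝ) * Real.log z - (p : ℝ) * Real.log y|
          ≤ |(q : ℝ) * Real.log z - (p : ℝ) * Real.log y - γ| + |γ| := this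
        _ < 1 + |γ| := by linarith
    have hd : (|γ| + 1) / ((q : ℝ) * δ) < Real.log y := hy1
    rw [div_lt_iff₀ (mul_pos hq0 hδ0)] at hd
    calc |(q : ℝ) * Real.log z - (p : ℝ) * Real.log y| < 1 + |γ| := hnum
      _ ≤ δ * ((q : ℝ) * Real.log y) := by nlinarith
  have hlogt := hδ t htlam
  have hgzgy : g z - g y = Real.log t / L := by
    simp only [hg]
    rw [htdef, Real.log_div (ne_of_gt hlogzpos) (ne_of_gt hlogypos)]
    ring
  have hbound : |(g z - g y) - Real.log lam / L| < 1 / 4 := by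
    rw [hgzgy, div_sub_div_same, abs_div, abs_of_pos hLpos, div_lt_iff₀ hLpos]
    linarith
  have hsl : Real.log lam / L = 1 ∨ Real.log lam / L = -1 := by
    rcases abs_cases (Real.log lam) with ⟨habs, _⟩ | ⟨habs, _⟩
    · left; rw [hLdef, habs]; exact div_self hlogne
    · right; rw [hLdef, habs]
      field_simp
  rcases hsl with hs | hs
  · left
    rw [hs] at hbound
    rw [abs_sub_lt_iff] at hbound
    constructor <;> linarith [hbound.1, hbound.2]
  · right
    rw [hs] at hbound
    rw [abs_lt] at hbound
    constructor <;> [linarith; linarith]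

/-- A uniform upper bound for the values of a ℕ-indexed function eventually ≤ 0. -/
lemma bdd_of_eventually_le {gq : ℕ → ℝ} (h : ∀ᶠ z : ℕ in atTop, gq z ≤ 0) :
    ∃ M, ∀ z : ℕ, gq z ≤ M := by
  obtain ⟨N, hN⟩ := eventually_atTop.mp h
  obtain ⟨M, hMem⟩ := ((Set.finite_Iio N).image gq).bddAbove
  refine ⟨max M 0, fun z => ?_⟩
  rcases lt_or_ge z N with hz | hz
  · exact le_trans (hMem ⟨z, hz, rfl⟩) (le_max_left _ _)
  · exact le_trans (hN z hz) (le_max_right _ _)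

lemma sign_mismatch₁ {P Q : Polynomial ℤ} {f : ℕ → ℤ}
    (hp : 1 ≤ P.natDegree) (hq : 1 ≤ Q.natDegree)
    (h : RamseyPR fun x y z => f x + P.eval (y : ℤ) = Q.eval (z : ℤ) ∧ f x ≠ 0)
    (ha : 0 < P.leadingCoeff) (hb : Q.leadingCoeff < 0) : False := by
  obtain ⟨j, c, Y, hc, hYinf, _, hsol⟩ := extract h (fun _ => (0 : Fin 1))
  have hdq : 0 < (Rp Q).degree := by
    rw [natDegree_pos_iff_degree_pos.symm, Rp_natDegree]; exact hq
  have hdp : 0 < (Rp P).degree := by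
    rw [natDegree_pos_iff_degree_pos.symm, Rp_natDegree]; exact hp
  have hQbot : Tendsto (fun z : ℕ => (Rp Q).eval (z : ℝ)) atTop atBot := by
    refine ((Rp Q).tendsto_atBot_of_leadingCoeff_nonpos hdq ?_).comp
      tendsto_natCast_atTop_atTop
    rw [Rp_leadingCoeff]; exact_mod_cast le_of_lt hb
  obtain ⟨M, hM⟩ := bdd_of_eventually_le (hQbot.eventually (eventually_le_atBot 0))
  have hPtop : Tendsto (fun y : ℕ => (c : ℝ) + (Rp P).eval (y : ℝ)) atTop atTop := by
    refine tendsto_atTop_add_const_left _ _ ?_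
    refine ((Rp P).tendsto_atTop_of_leadingCoeff_nonneg hdp ?_).comp
      tendsto_natCast_atTop_atTop
    rw [Rp_leadingCoeff]; exact_mod_cast le_of_lt ha
  obtain ⟨y, hyY, hyM⟩ :=
    ((infinite_frequently hYinf).and_eventually (hPtop.eventually_gt_atTop M)).exists
  obtain ⟨z, hz0, _, heq⟩ := hsol y hyY
  have heqR : (Rp Q).eval (z : ℝ) = (c : ℝ) + (Rp P).eval (y : ℝ) := by
    rw [Rp_eval, Rp_eval]; exact_mod_cast heq.symm
  have := hM z
  rw [heqR] at this
  linarith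

lemma sign_mismatch₂ {P Q : Polynomial ℤ} {f : ℕ → ℤ}
    (hp : 1 ≤ P.natDegree) (hq : 1 ≤ Q.natDegree)
    (h : RamseyPR fun x y z => f x + P.eval (y : ℤ) = Q.eval (z : ℤ) ∧ f x ≠ 0)
    (ha : P.leadingCoeff < 0) (hb : 0 < Q.leadingCoeff) : False := by
  obtain ⟨j, c, Y, hc, hYinf, _, hsol⟩ := extract h (fun _ => (0 : Fin 1))
  have hdq : 0 < (Rp Q).degree := by
    rw [natDegree_pos_iff_degree_pos.symm, Rp_natDegree]; exact hq
  have hdp : 0 < (Rp P).degree := by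
    rw [natDegree_pos_iff_degree_pos.symm, Rp_natDegree]; exact hp
  have hQtop : Tendsto (fun z : ℕ => -(Rp Q).eval (z : ℝ)) atTop atBot := by
    rw [tendsto_neg_atBot_iff]
    refine ((Rp Q).tendsto_atTop_of_leadingCoeff_nonneg hdq ?_).comp
      tendsto_natCast_atTop_atTop
    rw [Rp_leadingCoeff]; exact_mod_cast le_of_lt hb
  obtain ⟨M, hM⟩ := bdd_of_eventually_le (hQtop.eventually (eventually_le_atBot 0))
  have hPbot : Tendsto (fun y : ℕ => -((c : ℝ) + (Rp P).eval (y : ℝ))) atTop atTop := by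
    have : Tendsto (fun y : ℕ => (Rp P).eval (y : ℝ)) atTop atBot := by
      refine ((Rp P).tendsto_atBot_of_leadingCoeff_nonpos hdp ?_).comp
        tendsto_natCast_atTop_atTop
      rw [Rp_leadingCoeff]; exact_mod_cast le_of_lt ha
    have h2 : Tendsto (fun y : ℕ => -(Rp P).eval (y : ℝ)) atTop atTop := by
      rwa [tendsto_neg_atTop_iff]
    have := tendsto_atTop_add_const_left atTop (-(c : ℝ)) h2
    refine this.congr fun y => by ring
  obtain ⟨y, hyY, hyM⟩ :=
    ((infinite_frequently hYinf).and_eventually (hPbot.eventually_gt_atTop M)).exists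
  obtain ⟨z, hz0, _, heq⟩ := hsol y hyY
  have heqR : (Rp Q).eval (z : ℝ) = (c : ℝ) + (Rp P).eval (y : ℝ) := by
    rw [Rp_eval, Rp_eval]; exact_mod_cast heq.symm
  have := hM z
  rw [heqR] at this
  linarith

lemma lead_eq {P Q : Polynomial ℤ} {f : ℕ → ℤ}
    (hp : 1 ≤ P.natDegree) (hq : 1 ≤ Q.natDegree) (hpq : P.natDegree = Q.natDegree)
    (h : RamseyPR fun x y z => f x + P.eval (y : ℤ) = Q.eval (z : ℤ) ∧ f x ≠ 0) :
    P.leadingCoeff = Q.leadingCoeff := by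
  have hPne : P ≠ 0 := fun h0 => by simp [h0] at hp
  have hQne : Q ≠ 0 := fun h0 => by simp [h0] at hq
  have ha0 : P.leadingCoeff ≠ 0 := leadingCoeff_ne_zero.mpr hPne
  have hb0 : Q.leadingCoeff ≠ 0 := leadingCoeff_ne_zero.mpr hQne
  by_contra hab
  set a := P.leadingCoeff with hadef
  set b := Q.leadingCoeff with hbdef
  -- signs must agree
  have hsame : (0 < a ∧ 0 < b) ∨ (a < 0 ∧ b < 0) := by
    rcases lt_or_gt_of_ne ha0 with ha | ha <;> rcases lt_or_gt_of_ne hb0 with hb | hb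
    · exact Or.inr ⟨ha, hb⟩
    · exact (sign_mismatch₂ hp hq h ha hb).elim
    · exact (sign_mismatch₁ hp hq h ha hb).elim
    · exact Or.inl ⟨ha, hb⟩
  have habsne : |a| ≠ |b| := by
    rcases hsame with ⟨ha, hb⟩ | ⟨ha, hb⟩
    · rwa [abs_of_pos ha, abs_of_pos hb]
    · rw [abs_of_neg ha, abs_of_neg hb]
      intro hE; exact hab (by linarith)
  set γ : ℝ := Real.log ((a : ℤ) : ℝ) - Real.log ((b : ℤ) : ℝ) with hγ
  have hγ0 : γ ≠ 0 := by
    intro h0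
    apply habsne
    have h1 : Real.log ((a : ℤ) : ℝ) = Real.log ((b : ℤ) : ℝ) := by
      rw [hγ] at h0; linarith
    rw [← Real.log_abs ((a : ℤ) : ℝ), ← Real.log_abs ((b : ℤ) : ℝ)] at h1
    have h2 : |((a : ℤ) : ℝ)| = |((b : ℤ) : ℝ)| := by
      refine Real.log_injOn_pos ?_ ?_ h1
      · exact Set.mem_Ioi.mpr (abs_pos.mpr ((Int.cast_ne_zero (α := ℝ)).mpr ha0))
      · exact Set.mem_Ioi.mpr (abs_pos.mpr ((Int.cast_ne_zero (α := ℝ)).mpr hb0))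
    rw [← Int.cast_abs, ← Int.cast_abs] at h2
    exact_mod_cast h2
  set L := |γ| with hL
  have hLpos : 0 < L := abs_pos.mpr hγ0
  set q : ℕ := Q.natDegree with hqd
  refine clash h (fun n => (q : ℝ) * Real.log n / L) ?_
  intro c hc
  have hW := workhorse (Rp P) (Rp Q) (by rw [Rp_natDegree]; exact hp)
    (by rw [Rp_natDegree]; exact hq) (c : ℝ) (show (0:ℝ) < L / 4 by positivity) 2
  filter_upwards [hW] with y hy
  intro z hz0 heq
  have heqR : (Rp Q).eval (z : ℝ) = (c : ℝ) + (Rp P).eval (y : ℝ) := by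
    rw [Rp_eval, Rp_eval]; exact_mod_cast heq.symm
  obtain ⟨hz2, hzlog⟩ := hy z heqR
  rw [Rp_natDegree, Rp_natDegree, Rp_leadingCoeff, Rp_leadingCoeff, hpq] at hzlog
  have key : |((q : ℝ) * Real.log z / L - (q : ℝ) * Real.log y / L) - γ / L| < 1 / 4 := by
    have hrw : (q : ℝ) * Real.log z / L - (q : ℝ) * Real.log y / L - γ / L =
        ((q : ℝ) * Real.log z - (q : ℝ) * Real.log y - γ) / L := by ring
    rw [hrw, abs_div, abs_of_pos hLpos, div_lt_iff₀ hLpos]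
    have : (q : ℝ) * Real.log z - (q : ℝ) * Real.log y - γ =
        (q : ℝ) * Real.log z - (q : ℝ) * Real.log y -
          (Real.log ((a : ℤ) : ℝ) - Real.log ((b : ℤ) : ℝ)) := by rw [hγ]
    rw [this]
    calc |(q : ℝ) * Real.log z - (q : ℝ) * Real.log y -
          (Real.log ((a : ℤ) : ℝ) - Real.log ((b : ℤ) : ℝ))| < L / 4 := hzlog
      _ = 1 / 4 * L := by ring
  have hsl : γ / L = 1 ∨ γ / L = -1 := by
    rcases abs_cases γ with ⟨habs, _⟩ | ⟨habs, _⟩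
    · left; rw [hL, habs]; exact div_self hγ0
    · right; rw [hL, habs]; field_simp
  rcases hsl with hs | hs
  · left
    rw [hs, abs_sub_lt_iff] at key
    constructor <;> linarith [key.1, key.2]
  · right
    rw [hs, abs_lt] at key
    constructor <;> linarith [key.1, key.2]

lemma natDeg_lead_of_coeff {F : ℝ[X]} {n : ℕ} (hle : F.natDegree ≤ n) (hne : F.coeff n ≠ 0) :
    F.natDegree = n ∧ F.leadingCoeff = F.coeff n := by
  have h2 : F.natDegree = n := le_antisymm hle (le_natDegree_of_ne_zero hne)
  exact ⟨h2, by rw [leadingCoeff, h2]⟩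

lemma tendsto_atTop_of_coeff {F : ℝ[X]} {n : ℕ} (hn : 1 ≤ n) (hle : F.natDegree ≤ n)
    (hpos : 0 < F.coeff n) : Tendsto (fun x : ℝ => F.eval x) atTop atTop := by
  obtain ⟨hdeg, hlead⟩ := natDeg_lead_of_coeff hle (ne_of_gt hpos)
  refine F.tendsto_atTop_of_leadingCoeff_nonneg ?_ (by rw [hlead]; exact le_of_lt hpos)
  rw [← natDegree_pos_iff_degree_pos, hdeg]; omega

lemma tendsto_atBot_of_coeff {F : ℝ[X]} {n : ℕ} (hn : 1 ≤ n) (hle : F.natDegree ≤ n)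
    (hneg : F.coeff n < 0) : Tendsto (fun x : ℝ => F.eval x) atTop atBot := by
  obtain ⟨hdeg, hlead⟩ := natDeg_lead_of_coeff hle (ne_of_lt hneg)
  refine F.tendsto_atBot_of_leadingCoeff_nonpos ?_ (by rw [hlead]; exact le_of_lt hneg)
  rw [← natDegree_pos_iff_degree_pos, hdeg]; omega

/-- Coefficient `d-1` of the shifted difference polynomial. -/
lemma taylor_coeff_subdeg {Qr : ℝ[X]} {d : ℕ} (hd : Qr.natDegree = d) (hd2 : 2 ≤ d) (t : ℝ) :
    ((Polynomial.taylor t Qr)).coeff (d - 1) =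
      Qr.coeff (d - 1) + (d : ℝ) * Qr.leadingCoeff * t := by
  rw [taylor_coeff]
  have hH : (Polynomial.hasseDeriv (d - 1) Qr).natDegree < 2 := by
    have := Polynomial.natDegree_hasseDeriv_le Qr (d - 1)
    omega
  rw [Polynomial.eval_eq_sum_range' hH t]
  rw [Finset.sum_range_succ, Finset.sum_range_succ, Finset.sum_range_zero]
  rw [Polynomial.hasseDeriv_coeff, Polynomial.hasseDeriv_coeff]
  have h1 : 0 + (d - 1) = d - 1 := by omega
  have h2 : 1 + (d - 1) = d := by omega
  rw [h1, h2, Nat.choose_self]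
  have h3 : d.choose (d - 1) = d := by
    have := Nat.choose_symm (show 1 ≤ d by omega) (n := d)
    rw [this]; exact Nat.choose_one_right d
  rw [h3]
  have h4 : Qr.coeff d = Qr.leadingCoeff := by rw [leadingCoeff, hd]
  rw [h4]
  push_cast
  ring

/-- The window lemma: solutions of `Q(z) = c + P(y)` with `z, y` large satisfy
`|z - y - κ| < 1/3`, when `P, Q` have the same degree `d ≥ 2` and the same positive
leading coefficient. -/
lemma window (Pr Qr : ℝ[X]) {d : ℕ} (hd : Qr.natDegree = d) (hd2 : 2 ≤ d)
    (hdeq : Pr.natDegree = d) (hlead : Pr.leadingCoeff = Qr.leadingCoeff)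
    (hbpos : 0 < Qr.leadingCoeff) (κ : ℝ)
    (hκ : ((d : ℝ) * Qr.leadingCoeff) * κ = -(Qr.coeff (d - 1) - Pr.coeff (d - 1)))
    (c : ℝ) :
    ∀ᶠ y : ℕ in atTop, ∀ z : ℕ, Qr.eval (z : ℝ) = c + Pr.eval (y : ℝ) →
      |(z : ℝ) - (y : ℝ) - κ| < 1 / 3 := by
  set b := Qr.leadingCoeff with hb
  have hQne : Qr ≠ 0 := leadingCoeff_ne_zero.mp hbpos.ne'
  have hPne : Pr ≠ 0 := leadingCoeff_ne_zero.mp (by rw [hlead]; exact hbpos.ne')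
  -- (1) strict monotonicity of Q on a half line
  have hder : Tendsto (fun x : ℝ => Qr.derivative.eval x) atTop atTop := by
    refine tendsto_atTop_of_coeff (n := d - 1) (by omega) ?_ ?_
    · have := Qr.natDegree_derivative_le; omega
    · rw [Polynomial.coeff_derivative]
      have h2 : d - 1 + 1 = d := by omega
      rw [h2]
      have h4 : Qr.coeff d = b := by rw [hb, leadingCoeff, hd]
      rw [h4]
      have : (0:ℝ) < (d : ℝ) := by exact_mod_cast (by omega : 0 < d)
      push_cast
      nlinarith
  obtain ⟨X₀, hX₀⟩ := eventually_atTop.mp (hder.eventually_gt_atTop 0)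
  have hmono : StrictMonoOn (fun x : ℝ => Qr.eval x) (Set.Ici X₀) := by
    refine strictMonoOn_of_deriv_pos (convex_Ici X₀) Qr.continuousOn ?_
    intro x hx
    rw [interior_Ici] at hx
    rw [Polynomial.deriv]
    exact hX₀ x (le_of_lt hx)
  -- (2) the two comparison polynomials
  have hDt : ∀ t : ℝ, (Polynomial.taylor t Qr - Pr - C c).natDegree ≤ d - 1 ∧
      (Polynomial.taylor t Qr - Pr - C c).coeff (d - 1) =
        Qr.coeff (d - 1) - Pr.coeff (d - 1) + (d : ℝ) * b * t ∧
      ∀ x : ℝ, (Polynomial.taylor t Qr - Pr - C c).eval x =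
        Qr.eval (x + t) - Pr.eval x - c := by
    intro t
    refine ⟨?_, ?_, ?_⟩
    · rw [Polynomial.natDegree_le_iff_coeff_eq_zero]
      intro N hN
      rw [Polynomial.coeff_sub, Polynomial.coeff_sub]
      have hCc : (C c).coeff N = 0 := by
        rw [Polynomial.coeff_C]; simp only [ite_eq_right_iff]; intro h0; omega
      rcases eq_or_lt_of_le (show d ≤ N by omega) with hNd | hNd
      · have hT : (Polynomial.taylor t Qr).coeff N = b := by
          rw [← hNd]
          have hnat : (Polynomial.taylor t Qr).natDegree = d := by
            rw [Polynomial.natDegree_taylor, hd]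
          rw [show (Polynomial.taylor t Qr).coeff d = (Polynomial.taylor t Qr).leadingCoeff by
            rw [leadingCoeff, hnat]]
          rw [Polynomial.taylor_apply, Polynomial.leadingCoeff_comp (by
            rw [natDegree_X_add_C]; omega)]
          simp [leadingCoeff_X_add_C, hb]
        have hPc : Pr.coeff N = b := by
          rw [← hNd, show Pr.coeff d = Pr.leadingCoeff by rw [leadingCoeff, hdeq], hlead]
        rw [hT, hPc, hCc]; ring
      · have hT : (Polynomial.taylor t Qr).coeff N = 0 := by
          apply Polynomial.coeff_eq_zero_of_natDegree_lt
          rw [Polynomial.natDegree_taylor, hd]; exact hNd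
        have hPc : Pr.coeff N = 0 := by
          apply Polynomial.coeff_eq_zero_of_natDegree_lt
          rw [hdeq]; exact hNd
        rw [hT, hPc, hCc]; ring
    · rw [Polynomial.coeff_sub, Polynomial.coeff_sub, taylor_coeff_subdeg hd hd2 t]
      have hCc : (C c).coeff (d - 1) = 0 := by
        rw [Polynomial.coeff_C]; simp only [ite_eq_right_iff]; intro h0; omega
      rw [hCc]; ring
    · intro x
      rw [Polynomial.eval_sub, Polynomial.eval_sub, Polynomial.eval_C,
        Polynomial.taylor_apply, Polynomial.eval_comp]
      simp
  -- (3) upper comparison tends to +∞, lower to -∞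
  have hdb : (0:ℝ) < (d : ℝ) * b := by
    have : (0:ℝ) < (d : ℝ) := by exact_mod_cast (by omega : 0 < d)
    positivity
  have hup : Tendsto (fun x : ℝ => Qr.eval (x + (κ + 1/3)) - Pr.eval x - c) atTop atTop := by
    obtain ⟨hle, hco, hev⟩ := hDt (κ + 1/3)
    have := tendsto_atTop_of_coeff (n := d - 1) (by omega) hle (by rw [hco]; nlinarith)
    exact this.congr fun x => hev x
  have hdown : Tendsto (fun x : ℝ => Qr.eval (x + (κ - 1/3)) - Pr.eval x - c) atTop atBot := by
    obtain ⟨hle, hco, hev⟩ := hDt (κ - 1/3)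
    have := tendsto_atBot_of_coeff (n := d - 1) (by omega) hle (by rw [hco]; nlinarith)
    exact this.congr fun x => hev x
  -- (4) solutions are bounded below
  have habs : Tendsto (fun y : ℕ => |Pr.eval (y : ℝ)|) atTop atTop :=
    (Polynomial.abs_tendsto_atTop Pr (by rw [← natDegree_pos_iff_degree_pos, hdeq]; omega)).comp
      tendsto_natCast_atTop_atTop
  have hcabs : Tendsto (fun y : ℕ => |c + Pr.eval (y : ℝ)|) atTop atTop := by
    refine tendsto_atTop_mono' atTop ?_ (tendsto_atTop_add_const_right atTop (-|c|) habs)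
    filter_upwards with y
    have : |Pr.eval (y : ℝ)| ≤ |c + Pr.eval (y : ℝ)| + |c| := by
      calc |Pr.eval (y : ℝ)| = |c + Pr.eval (y : ℝ) - c| := by ring_nf
      _ ≤ |c + Pr.eval (y : ℝ)| + |c| := abs_sub _ _
    linarith
  set Z₀ : ℕ := ⌈max X₀ 0⌉₊ + 1 with hZ₀
  obtain ⟨M, hM⟩ : ∃ M, ∀ z : ℕ, z < Z₀ → |Qr.eval (z : ℝ)| ≤ M := by
    obtain ⟨M, hMem⟩ := ((Set.finite_Iio Z₀).image fun z : ℕ => |Qr.eval (z : ℝ)|).bddAbove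
    exact ⟨M, fun z hz => hMem ⟨z, hz, rfl⟩⟩
  -- (5) combine
  have hyev : ∀ᶠ y : ℕ in atTop, X₀ ≤ (y : ℝ) + (κ - 1/3) := by
    have : Tendsto (fun y : ℕ => (y : ℝ) + (κ - 1/3)) atTop atTop :=
      tendsto_atTop_add_const_right atTop _ tendsto_natCast_atTop_atTop
    exact this.eventually_ge_atTop X₀
  filter_upwards [hcabs.eventually_gt_atTop M, (hup.comp tendsto_natCast_atTop_atTop).eventually_gt_atTop 0,
    (hdown.comp tendsto_natCast_atTop_atTop).eventually_lt_atBot 0, hyev] with y hyM hyup hydown hyX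
  intro z heq
  have hzZ : Z₀ ≤ z := by
    by_contra hlt
    push_neg at hlt
    have := hM z hlt
    rw [heq] at this
    linarith
  have hzX : X₀ ≤ (z : ℝ) := by
    have h1 : (Z₀ : ℝ) ≤ (z : ℝ) := by exact_mod_cast hzZ
    have h2 : max X₀ 0 ≤ (⌈max X₀ 0⌉₊ : ℝ) := Nat.le_ceil _
    have h3 : ((⌈max X₀ 0⌉₊ : ℕ) : ℝ) + 1 = (Z₀ : ℝ) := by rw [hZ₀]; push_cast; ring
    have := le_max_left X₀ 0
    linarith
  simp only [Function.comp] at hyup hydown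
  -- now sandwich z
  rw [abs_lt]
  constructor
  · -- y + κ - 1/3 < z
    by_contra hge
    push_neg at hge
    have hzin : (z : ℝ) ∈ Set.Ici X₀ := hzX
    have hpin : (y : ℝ) + (κ - 1/3) ∈ Set.Ici X₀ := by
      simp only [Set.mem_Ici]; linarith
    have hle' : (z : ℝ) ≤ (y : ℝ) + (κ - 1/3) := by linarith
    have hmm := hmono.monotoneOn hzin hpin hle'
    rw [heq] at hmm
    linarith
  · -- z < y + κ + 1/3
    by_contra hge
    push_neg at hge
    have hzin : (z : ℝ) ∈ Set.Ici X₀ := hzX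
    have hpin : (y : ℝ) + (κ + 1/3) ∈ Set.Ici X₀ := by
      simp only [Set.mem_Ici]; linarith
    have hle' : (y : ℝ) + (κ + 1/3) ≤ (z : ℝ) := by linarith
    have hmm := hmono.monotoneOn hpin hzin hle'
    rw [heq] at hmm
    linarith

lemma Rp_coeff (P : Polynomial ℤ) (n : ℕ) : (Rp P).coeff n = ((P.coeff n : ℤ) : ℝ) :=
  Polynomial.coeff_map _ _

lemma round_forced {κ : ℝ} {m : ℤ} (h : |(m : ℝ) - κ| < 1/3) : m = round κ := by
  rw [abs_lt] at h
  rw [round_eq]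
  symm
  rw [Int.floor_eq_iff]
  constructor <;> [skip; push_cast] <;> linarith [h.1, h.2]

lemma deg_two_false {P Q : Polynomial ℤ} {f : ℕ → ℤ}
    (hP0 : P.eval 0 = 0) (hQ0 : Q.eval 0 = 0)
    (hq2 : 2 ≤ Q.natDegree) (hdeq : P.natDegree = Q.natDegree)
    (hlead : P.leadingCoeff = Q.leadingCoeff)
    (h : RamseyPR fun x y z => f x + P.eval (y : ℤ) = Q.eval (z : ℤ) ∧ f x ≠ 0) :
    False := by
  have hQne : Q ≠ 0 := fun h0 => by simp [h0] at hq2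
  set d := Q.natDegree with hddef
  set b := Q.leadingCoeff with hbdef
  have hb0 : b ≠ 0 := leadingCoeff_ne_zero.mpr hQne
  have hdb0 : ((d : ℝ) * (b : ℝ)) ≠ 0 := by
    apply mul_ne_zero
    · exact_mod_cast (by omega : d ≠ 0)
    · exact_mod_cast hb0
  set κ : ℝ := -(((Q.coeff (d - 1) : ℤ) : ℝ) - ((P.coeff (d - 1) : ℤ) : ℝ)) /
      ((d : ℝ) * (b : ℝ)) with hκdef
  have hκmul : ((d : ℝ) * (b : ℝ)) * κ =
      -(((Q.coeff (d - 1) : ℤ) : ℝ) - ((P.coeff (d - 1) : ℤ) : ℝ)) := by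
    rw [hκdef]; field_simp
  have key : ∀ c : ℤ, ∀ᶠ y : ℕ in atTop, ∀ z : ℕ,
      c + P.eval (y : ℤ) = Q.eval (z : ℤ) → |(z : ℝ) - (y : ℝ) - κ| < 1/3 := by
    intro c
    rcases lt_or_gt_of_ne hb0 with hbneg | hbpos
    · have hw := window (Rp (-P)) (Rp (-Q)) (d := d)
        (by rw [Rp_natDegree, natDegree_neg]) hq2
        (by rw [Rp_natDegree, natDegree_neg, hdeq])
        (by rw [Rp_leadingCoeff, Rp_leadingCoeff, leadingCoeff_neg, leadingCoeff_neg, hlead])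
        (by rw [Rp_leadingCoeff, leadingCoeff_neg]; push_cast; simp; exact_mod_cast hbneg)
        κ ?_ (-(c : ℝ))
      · filter_upwards [hw] with y hy z heq
        apply hy z
        rw [Rp_eval, Rp_eval]
        have : (-Q).eval (z : ℤ) = -c + (-P).eval (y : ℤ) := by
          simp only [eval_neg]; omega
        rw [this]; push_cast; ring
      · rw [Rp_leadingCoeff, leadingCoeff_neg, Rp_coeff, Rp_coeff]
        simp only [coeff_neg]
        push_cast
        push_cast at hκmul
        nlinarith [hκmul]
    · have hw := window (Rp P) (Rp Q) (d := d) (by rw [Rp_natDegree]) hq2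
        (by rw [Rp_natDegree, hdeq])
        (by rw [Rp_leadingCoeff, Rp_leadingCoeff, hlead])
        (by rw [Rp_leadingCoeff]; exact_mod_cast hbpos)
        κ ?_ ((c : ℝ))
      · filter_upwards [hw] with y hy z heq
        apply hy z
        rw [Rp_eval, Rp_eval]
        exact_mod_cast heq.symm
      · rw [Rp_leadingCoeff, Rp_coeff, Rp_coeff]
        exact_mod_cast hκmul
  set k : ℤ := round κ with hkdef
  have key2 : ∀ c : ℤ, ∀ᶠ y : ℕ in atTop, ∀ z : ℕ,
      c + P.eval (y : ℤ) = Q.eval (z : ℤ) → (z : ℤ) = (y : ℤ) + k := by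
    intro c
    filter_upwards [key c] with y hy z heq
    have h1 := hy z heq
    have h2 : |((((z : ℤ) - (y : ℤ)) : ℤ) : ℝ) - κ| < 1/3 := by
      have he : ((((z : ℤ) - (y : ℤ)) : ℤ) : ℝ) - κ = (z : ℝ) - (y : ℝ) - κ := by
        push_cast; ring
      rw [he]; exact h1
    have h3 := round_forced h2
    omega
  by_cases hk : k = 0
  · obtain ⟨j, c, Y, hc, hYinf, _, hsol⟩ := extract h (fun _ => (0 : Fin 1))
    have hroots : {y : ℕ | y ∈ Y ∧ ∀ z : ℕ,
        c + P.eval (y : ℤ) = Q.eval (z : ℤ) → (z : ℤ) = (y : ℤ) + k}.Infinite := by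
      rw [← Nat.frequently_atTop_iff_infinite]
      exact ((infinite_frequently hYinf).and_eventually (key2 c))
    have hD : (Q - P - C c) ≠ 0 := by
      intro h0
      have h1 : (Q - P - C c).eval 0 = 0 := by rw [h0]; simp
      simp only [eval_sub, eval_C, hP0, hQ0] at h1
      omega
    have hfin : {x : ℤ | (Q - P - C c).IsRoot x}.Finite :=
      Polynomial.finite_setOf_isRoot hD
    have hsub : {y : ℕ | y ∈ Y ∧ ∀ z : ℕ,
        c + P.eval (y : ℤ) = Q.eval (z : ℤ) → (z : ℤ) = (y : ℤ) + k} ⊆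
        (fun y : ℕ => (y : ℤ)) ⁻¹' {x : ℤ | (Q - P - C c).IsRoot x} := by
      rintro y ⟨hyY, hyall⟩
      obtain ⟨z, hz0, _, heq⟩ := hsol y hyY
      have hzy := hyall z heq
      rw [hk, add_zero] at hzy
      simp only [Set.mem_preimage, Set.mem_setOf_eq, IsRoot.def, eval_sub, eval_C]
      rw [hzy] at heq
      omega
    have hpre : ((fun y : ℕ => (y : ℤ)) ⁻¹' {x : ℤ | (Q - P - C c).IsRoot x}).Finite :=
      hfin.preimage (Set.injOn_of_injective (fun a b hab => by exact_mod_cast hab))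
    exact hroots (hpre.subset hsub)
  · set K := k.natAbs with hKdef
    have hK0 : 0 < K := by omega
    set col : ℕ → Fin 2 := fun n => ⟨(n / K) % 2, Nat.mod_lt _ (by omega)⟩ with hcol
    obtain ⟨j, c, Y, hc, hYinf, hYcol, hsol⟩ := extract h col
    obtain ⟨y, hyY, hyev⟩ := ((infinite_frequently hYinf).and_eventually
      ((key2 c).and (eventually_ge_atTop K))).exists
    obtain ⟨z, hz0, hzcol, heq⟩ := hsol y hyY
    have hzy := hyev.1 z heq
    have hyK := hyev.2
    have hcoleq : (z / K) % 2 = (y / K) % 2 :=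
      congrArg Fin.val (hzcol.trans ((hYcol y hyY)).symm)
    rcases lt_or_gt_of_ne hk with hkneg | hkpos
    · have hyz : y = z + K := by omega
      rw [hyz, Nat.add_div_right _ hK0] at hcoleq
      omega
    · have hyz : z = y + K := by omega
      rw [hyz, Nat.add_div_right _ hK0] at hcoleq
      omega

theorem stmt_12 (P Q : Polynomial ℤ) (hP : P ≠ 0) (hQ : Q ≠ 0)
    (hP0 : P.eval 0 = 0) (hQ0 : Q.eval 0 = 0) (f : ℕ → ℤ)
    (h : RamseyPR fun x y z => f x + P.eval (y : ℤ) = Q.eval (z : ℤ) ∧ f x ≠ 0) :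
    P = Q ∧ P.natDegree = 1 := by
  have hp : 1 ≤ P.natDegree := natDegree_pos_of_root hP hP0
  have hq : 1 ≤ Q.natDegree := natDegree_pos_of_root hQ hQ0
  have hdeq : P.natDegree = Q.natDegree := deg_eq hp hq h
  have hlead : P.leadingCoeff = Q.leadingCoeff := lead_eq hp hq hdeq h
  have hd1 : P.natDegree = 1 := by
    by_contra hne
    exact deg_two_false hP0 hQ0 (by omega) hdeq hlead h
  refine ⟨?_, hd1⟩
  have hqd1 : Q.natDegree = 1 := by omega
  have hP1 := Polynomial.eq_X_add_C_of_natDegree_le_one (le_of_eq hd1)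
  have hQ1 := Polynomial.eq_X_add_C_of_natDegree_le_one (le_of_eq hqd1)
  have hPc0 : P.coeff 0 = 0 := by rw [Polynomial.coeff_zero_eq_eval_zero]; exact hP0
  have hQc0 : Q.coeff 0 = 0 := by rw [Polynomial.coeff_zero_eq_eval_zero]; exact hQ0
  have hPc1 : P.coeff 1 = P.leadingCoeff := by rw [Polynomial.leadingCoeff, hd1]
  have hQc1 : Q.coeff 1 = Q.leadingCoeff := by rw [Polynomial.leadingCoeff, hqd1]
  rw [hP1, hQ1, hPc0, hQc0, hPc1, hQc1, hlead]
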